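/- Let f(t) = c_1·exp(i·ξ_1·t) + … + c_n·exp(i·ξ_n·t) for t ∈ ℝ, where n ≥ 1, ξ_1, …, ξ_n are distinct real numbers and c_1, …, c_n are nonzero complex numbers. Then there exist ε > 0 and a sequence (t_k)_{k ∈ ℕ} of real numbers with t_k → +∞ as k → ∞ such that |f(t_k)| ≥ ε for all k ∈ ℕ. -/

import Mathlib

open Complex

noncomputable section

/-- If `f(t) = c₁ e^{i ξ₁ t} + … + c_n e^{i ξ_n t}` with `n ≥ 1`, distinct real
frequencies `ξⱼ` and nonzero coefficients `cⱼ`, then there are `ε > 0` and a sequence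
`t_k → +∞` with `|f(t_k)| ≥ ε` for all `k`. -/
theorem trigPoly_large_along_sequence (n : ℕ) (hn : 0 < n)
    (ξ : Fin n → ℝ) (c : Fin n → ℂ)
    (hξ : Function.Injective ξ) (hc : ∀ j, c j ≠ 0) :
    ∃ ε : ℝ, 0 < ε ∧
      ∃ t : ℕ → ℝ, Filter.Tendsto t Filter.atTop Filter.atTop ∧
        ∀ k : ℕ, ε ≤ ‖∑ j, c j * Complex.exp (Complex.I * (ξ j : ℂ) * (t k : ℂ))‖ := by
  classical
  set j₀ : Fin n := ⟨0, hn⟩ with hj₀def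
  set D : ℝ := ∑ j, |ξ j - ξ j₀| with hDdef
  have hD0 : 0 ≤ D := Finset.sum_nonneg fun j _ => abs_nonneg _
  have hden : 0 < 1 + D := by linarith
  set τ : ℝ := Real.pi / (1 + D) with hτdef
  have hτ : 0 < τ := div_pos Real.pi_pos hden
  set θ : Fin n → ℝ := fun j => (ξ j - ξ j₀) * τ with hθdef
  set r : Fin n → ℂ := fun j => Complex.exp ((θ j : ℂ) * Complex.I) with hrdef
  have habs_r : ∀ j, ‖r j‖ = 1 := fun j => Complex.norm_exp_ofReal_mul_I _
  have hθ_lt : ∀ j, |θ j| < Real.pi := by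
    intro j
    have h1 : |ξ j - ξ j₀| ≤ D :=
      Finset.single_le_sum (f := fun j => |ξ j - ξ j₀|) (fun j _ => abs_nonneg _)
        (Finset.mem_univ j)
    have h2 : |θ j| = |ξ j - ξ j₀| * τ := by
      rw [hθdef]; simp [abs_mul, abs_of_pos hτ]
    rw [h2, hτdef]
    calc |ξ j - ξ j₀| * (Real.pi / (1 + D))
        < (1 + D) * (Real.pi / (1 + D)) := by
          apply mul_lt_mul_of_pos_right _ (div_pos Real.pi_pos hden)
          linarith
      _ = Real.pi := by field_simp
  have hrj₀ : r j₀ = 1 := by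
    simp [hrdef, hθdef]
  have hrne : ∀ j, j ≠ j₀ → r j ≠ 1 := by
    intro j hj h1
    rw [hrdef] at h1
    simp only at h1
    rw [Complex.exp_eq_one_iff] at h1
    obtain ⟨k, hk⟩ := h1
    have hk' : (θ j : ℂ) * I = ((k : ℂ) * (2 * Real.pi)) * I := by rw [hk]; push_cast; ring
    have hθj : (θ j : ℂ) = (k : ℂ) * (2 * Real.pi) := mul_right_cancel₀ I_ne_zero hk'
    have hθjr : θ j = (k : ℝ) * (2 * Real.pi) := by exact_mod_cast hθj
    have hne : θ j ≠ 0 := by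
      apply mul_ne_zero _ hτ.ne'
      exact sub_ne_zero.mpr fun h => hj (hξ h)
    rcases eq_or_ne k 0 with h | h
    · rw [h] at hθjr; simp at hθjr; exact hne hθjr
    · have hk1 : (1 : ℝ) ≤ |(k : ℝ)| := by exact_mod_cast Int.one_le_abs h
      have : (2 : ℝ) * Real.pi ≤ |θ j| := by
        rw [hθjr, abs_mul]
        have hpi : |2 * Real.pi| = 2 * Real.pi := abs_of_pos (by positivity)
        rw [hpi]
        nlinarith [Real.pi_pos]
      linarith [hθ_lt j, Real.pi_pos]
  -- the sampled values
  set F : ℝ → ℂ := fun s => ∑ j, c j * Complex.exp (Complex.I * (ξ j : ℂ) * (s : ℂ)) with hFdef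
  set G : ℕ → ℂ := fun m => ∑ j, c j * r j ^ m with hGdef
  have habs_exp : ∀ a b : ℝ, ‖Complex.exp (Complex.I * (a : ℂ) * (b : ℂ))‖ = 1 := by
    intro a b
    rw [show (Complex.I * (a : ℂ) * (b : ℂ)) = ((a * b : ℝ) : ℂ) * Complex.I by push_cast; ring]
    exact Complex.norm_exp_ofReal_mul_I _
  have hFG : ∀ m : ℕ, ‖F ((m : ℝ) * τ)‖ = ‖G m‖ := by
    intro m
    have key : F ((m : ℝ) * τ)
        = G m * Complex.exp (Complex.I * (ξ j₀ : ℂ) * (((m : ℝ) * τ : ℝ) : ℂ)) := by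
      rw [hFdef, hGdef]
      simp only [Finset.sum_mul]
      refine Finset.sum_congr rfl fun j _ => ?_
      rw [hrdef]
      simp only
      rw [← Complex.exp_nat_mul, mul_assoc (c j), ← Complex.exp_add]
      congr 2
      rw [hθdef]
      push_cast
      ring
    rw [key, norm_mul, habs_exp, mul_one]
  -- geometric sum decomposition
  set B : ℝ := ∑ j ∈ Finset.univ.erase j₀, 2 * ‖c j‖ / ‖r j - 1‖
    with hBdef
  have hB0 : 0 ≤ B := Finset.sum_nonneg fun j _ => by positivity
  have hsum : ∀ M N : ℕ,
      ∑ m ∈ Finset.range N, G (M + m)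
        = (N : ℂ) * c j₀
          + ∑ j ∈ Finset.univ.erase j₀, c j * r j ^ M * ((r j ^ N - 1) / (r j - 1)) := by
    intro M N
    rw [hGdef]
    simp only
    rw [Finset.sum_comm]
    have : ∀ j : Fin n, ∑ m ∈ Finset.range N, c j * r j ^ (M + m)
        = c j * r j ^ M * ∑ m ∈ Finset.range N, r j ^ m := by
      intro j
      rw [Finset.mul_sum]
      refine Finset.sum_congr rfl fun m _ => ?_
      rw [pow_add]; ring
    simp only [this]
    rw [← Finset.add_sum_erase _ _ (Finset.mem_univ j₀)]
    congr 1
    · rw [hrj₀]; simp [Finset.sum_const]; ring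
    · refine Finset.sum_congr rfl fun j hj => ?_
      rw [geom_sum_eq (hrne j (Finset.mem_erase.mp hj).1)]
  have habs_bound : ∀ M N : ℕ,
      (N : ℝ) * ‖c j₀‖ - B ≤ ‖∑ m ∈ Finset.range N, G (M + m)‖ := by
    intro M N
    rw [hsum M N]
    have h1 : ‖∑ j ∈ Finset.univ.erase j₀,
        c j * r j ^ M * ((r j ^ N - 1) / (r j - 1))‖ ≤ B := by
      refine le_trans (norm_sum_le _ _) ?_
      rw [hBdef]
      refine Finset.sum_le_sum fun j hj => ?_
      have hrj : r j ≠ 1 := hrne j (Finset.mem_erase.mp hj).1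
      have hpos : 0 < ‖r j - 1‖ := by
        simpa [norm_pos_iff, sub_eq_zero] using hrj
      have h2 : ‖r j ^ N - 1‖ ≤ 2 := by
        calc ‖r j ^ N - 1‖ ≤ ‖r j ^ N‖ + 1 := by
              simpa using norm_sub_le (r j ^ N) 1
          _ = 2 := by rw [norm_pow, habs_r, one_pow]; norm_num
      rw [norm_mul, norm_mul, norm_div, norm_pow, habs_r, one_pow, mul_one,
        mul_div_assoc', div_le_div_iff₀ hpos hpos]
      nlinarith [mul_nonneg (mul_nonneg (norm_nonneg (c j))
        (sub_nonneg.mpr h2)) hpos.le]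
    calc (N : ℝ) * ‖c j₀‖ - B
        ≤ ‖(N : ℂ) * c j₀‖
          - ‖∑ j ∈ Finset.univ.erase j₀,
              c j * r j ^ M * ((r j ^ N - 1) / (r j - 1))‖ := by
          rw [norm_mul, Complex.norm_natCast]
          linarith
      _ ≤ _ :=
          norm_sub_le_norm_add ((N : ℂ) * c j₀)
            (∑ j ∈ Finset.univ.erase j₀, c j * r j ^ M * ((r j ^ N - 1) / (r j - 1)))
  -- choose the window length
  set ε : ℝ := ‖c j₀‖ / 2 with hεdef
  have hε : 0 < ε := by
    have := hc j₀
    rw [hεdef]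
    have : 0 < ‖c j₀‖ := by simpa [norm_pos_iff] using hc j₀
    linarith
  obtain ⟨N, hN⟩ := exists_nat_gt (max 1 (B / ε))
  have hN1 : 1 ≤ (N : ℝ) := le_of_lt (lt_of_le_of_lt (le_max_left _ _) hN)
  have hNB : B ≤ (N : ℝ) * ε := by
    have h2 : B / ε < (N : ℝ) := lt_of_le_of_lt (le_max_right _ _) hN
    rw [div_lt_iff₀ hε] at h2
    linarith
  have hNpos : 0 < N := by exact_mod_cast lt_of_lt_of_le zero_lt_one hN1
  -- in every window of length N there is a large sample
  have hwin : ∀ M : ℕ, ∃ m : ℕ, ε ≤ ‖F (((M + m : ℕ) : ℝ) * τ)‖ := by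
    intro M
    have hsum_le : ∑ m ∈ Finset.range N, ε
        ≤ ∑ m ∈ Finset.range N, ‖F (((M + m : ℕ) : ℝ) * τ)‖ := by
      have h1 : (N : ℝ) * ε ≤ ‖∑ m ∈ Finset.range N, G (M + m)‖ := by
        have := habs_bound M N
        have hNc : (N : ℝ) * ‖c j₀‖ - B ≥ (N : ℝ) * ε := by
          rw [hεdef] at hNB ⊢
          nlinarith
        linarith
      have h2 : ‖∑ m ∈ Finset.range N, G (M + m)‖
          ≤ ∑ m ∈ Finset.range N, ‖G (M + m)‖ :=
        norm_sum_le _ _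
      rw [Finset.sum_const, Finset.card_range, nsmul_eq_mul]
      calc (N : ℝ) * ε ≤ ‖∑ m ∈ Finset.range N, G (M + m)‖ := h1
        _ ≤ ∑ m ∈ Finset.range N, ‖G (M + m)‖ := h2
        _ = ∑ m ∈ Finset.range N, ‖F (((M + m : ℕ) : ℝ) * τ)‖ := by
            refine Finset.sum_congr rfl fun m _ => ?_
            rw [hFG (M + m)]
    obtain ⟨m, _, hm⟩ := Finset.exists_le_of_sum_le ⟨0, Finset.mem_range.mpr hNpos⟩ hsum_le
    exact ⟨m, hm⟩
  choose m hm using hwin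
  refine ⟨ε, hε, fun k => ((k + m k : ℕ) : ℝ) * τ, ?_, ?_⟩
  · apply Filter.tendsto_atTop_mono (fun k => ?_)
      (Filter.Tendsto.atTop_mul_const hτ tendsto_natCast_atTop_atTop)
    have : (k : ℝ) ≤ ((k + m k : ℕ) : ℝ) := by push_cast; linarith [Nat.cast_nonneg (m k) (α := ℝ)]
    exact mul_le_mul_of_nonneg_right this hτ.le
  · intro k
    exact hm k
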